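/- For every ε ∈ (0,1], q ∈ [1,∞), and x ∈ ℝ^p, the εq-norm satisfies ‖x‖_1 / (p^{1 − 1/q}(p^{1/q}(1−ε) + ε)) ≤ ‖x‖_{εq} ≤ ‖x‖_1, where ‖x‖_1 = ∑_{i=1}^p |x_i|. -/

import Mathlib

/-- The ℓ_1 norm on `ℝ^p`. -/
noncomputable def l1Norm (p : ℕ) (x : Fin p → ℝ) : ℝ :=
  ∑ i : Fin p, |x i|

lemma aux_two_term_rpow {a b q : ℝ} (ha : 0 ≤ a) (hb : 0 ≤ b) (hq : 1 ≤ q) :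
    a ^ q + b ^ q ≤ (a + b) ^ q := by
  have h := NNReal.add_rpow_le_rpow_add a.toNNReal b.toNNReal hq
  rw [← NNReal.coe_le_coe] at h
  push_cast at h
  rwa [Real.coe_toNNReal _ ha, Real.coe_toNNReal _ hb] at h

lemma aux_sum_rpow_le {ι : Type*} (s : Finset ι) (f : ι → ℝ) {q : ℝ}
    (hf : ∀ i, 0 ≤ f i) (hq : 1 ≤ q) :
    ∑ i ∈ s, f i ^ q ≤ (∑ i ∈ s, f i) ^ q := by
  classical
  induction s using Finset.cons_induction with
  | empty =>
      simp [Real.zero_rpow (by positivity : q ≠ 0)]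
  | cons a s has ih =>
      rw [Finset.sum_cons, Finset.sum_cons]
      calc f a ^ q + ∑ i ∈ s, f i ^ q ≤ f a ^ q + (∑ i ∈ s, f i) ^ q := by linarith
        _ ≤ (f a + ∑ i ∈ s, f i) ^ q :=
          aux_two_term_rpow (hf a) (Finset.sum_nonneg fun i _ => hf i) hq

/-- Let `N` be the εq-norm.  Then for every `x ∈ ℝ^p`,
`‖x‖_1 / (p^{1-1/q}(p^{1/q}(1-ε)+ε)) ≤ N x ≤ ‖x‖_1`. -/
theorem epsq_norm_l1_bounds (p : ℕ) (ε q : ℝ)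
    (hε0 : 0 < ε) (hε1 : ε ≤ 1) (hq : 1 ≤ q)
    (N : (Fin p → ℝ) → ℝ)
    (hN0 : ∀ x : Fin p → ℝ, 0 ≤ N x)
    (hNeq : ∀ x : Fin p → ℝ,
      ∑ i : Fin p, (max (|x i| - (1 - ε) * N x) 0) ^ q = (ε * N x) ^ q)
    (x : Fin p → ℝ) :
    l1Norm p x / ((p : ℝ) ^ (1 - 1 / q) * ((p : ℝ) ^ (1 / q) * (1 - ε) + ε)) ≤ N x ∧
    N x ≤ l1Norm p x := by
  have hq0 : (0:ℝ) < q := lt_of_lt_of_le one_pos hq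
  set v := N x with hv
  set S := l1Norm p x with hS
  have hv0 : 0 ≤ v := hN0 x
  have hS0 : 0 ≤ S := Finset.sum_nonneg fun i _ => abs_nonneg _
  set a : Fin p → ℝ := fun i => max (|x i| - (1 - ε) * v) 0 with hadef
  have ha0 : ∀ i, 0 ≤ a i := fun i => le_max_right _ _
  have hsum : ∑ i : Fin p, a i ^ q = (ε * v) ^ q := hNeq x
  have hxiS : ∀ i, |x i| ≤ S := fun i =>
    Finset.single_le_sum (f := fun i => |x i|) (fun j _ => abs_nonneg _) (Finset.mem_univ i)
  -- Upper bound
  have hub : v ≤ S := by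
    by_contra hlt
    push_neg at hlt
    have hai : ∀ i, a i ≤ ε * |x i| := by
      intro i
      apply max_le _ (by positivity)
      nlinarith [hxiS i, abs_nonneg (x i)]
    have h1 : (ε * v) ^ q ≤ (ε * S) ^ q := by
      rw [← hsum]
      calc ∑ i : Fin p, a i ^ q ≤ ∑ i : Fin p, (ε * |x i|) ^ q := by
            apply Finset.sum_le_sum
            intro i _
            exact Real.rpow_le_rpow (ha0 i) (hai i) hq0.le
        _ ≤ (∑ i : Fin p, ε * |x i|) ^ q :=
            aux_sum_rpow_le _ _ (fun i => by positivity) hq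
        _ = (ε * S) ^ q := by rw [← Finset.mul_sum]; rfl
    have h2 : ε * v ≤ ε * S :=
      (Real.rpow_le_rpow_iff (by positivity) (by positivity) hq0).mp h1
    have := (mul_le_mul_iff_right₀ hε0).mp h2
    linarith
  refine ⟨?_, hub⟩
  -- Lower bound
  rcases Nat.eq_zero_or_pos p with hp | hp
  · subst hp
    have : S = 0 := by simp [hS, l1Norm]
    rw [this]
    simp only [zero_div]
    exact hv0
  have hp0 : (0:ℝ) < (p:ℝ) := by exact_mod_cast hp
  -- power mean inequality
  have hpm := Real.arith_mean_le_rpow_mean (Finset.univ : Finset (Fin p))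
    (fun _ => (p:ℝ)⁻¹) a (fun i _ => by positivity)
    (by simp [Finset.card_univ]; field_simp) (fun i _ => ha0 i) hq
  have hsum' : ∑ i : Fin p, (p:ℝ)⁻¹ * a i ^ q = (p:ℝ)⁻¹ * (ε * v) ^ q := by
    rw [← Finset.mul_sum, hsum]
  rw [hsum', ← Finset.mul_sum] at hpm
  have hrhs : ((p:ℝ)⁻¹ * (ε * v) ^ q) ^ (1/q) = ((p:ℝ)⁻¹) ^ (1/q) * (ε * v) := by
    rw [Real.mul_rpow (by positivity) (by positivity), ← Real.rpow_mul (by positivity),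
      mul_one_div, div_self hq0.ne', Real.rpow_one]
  rw [hrhs] at hpm
  -- multiply by p
  have hsuma : ∑ i : Fin p, a i ≤ (p:ℝ) ^ (1 - 1/q) * (ε * v) := by
    have hkey : (p:ℝ) * ((p:ℝ)⁻¹) ^ (1/q) = (p:ℝ) ^ (1 - 1/q) := by
      rw [Real.inv_rpow hp0.le, Real.rpow_sub hp0, Real.rpow_one]; ring
    calc ∑ i : Fin p, a i = (p:ℝ) * ((p:ℝ)⁻¹ * ∑ i : Fin p, a i) := by
          field_simp
      _ ≤ (p:ℝ) * (((p:ℝ)⁻¹) ^ (1/q) * (ε * v)) := by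
          apply mul_le_mul_of_nonneg_left hpm hp0.le
      _ = (p:ℝ) ^ (1 - 1/q) * (ε * v) := by rw [← mul_assoc, hkey]
  -- lower bound on sum of a
  have hsuma' : S - (p:ℝ) * ((1 - ε) * v) ≤ ∑ i : Fin p, a i := by
    have : ∑ i : Fin p, (|x i| - (1 - ε) * v) ≤ ∑ i : Fin p, a i :=
      Finset.sum_le_sum fun i _ => le_max_left _ _
    rwa [Finset.sum_sub_distrib, Finset.sum_const, Finset.card_univ, Fintype.card_fin,
      nsmul_eq_mul] at this
  -- combine
  have hpq : (p:ℝ) ^ (1 - 1/q) * (p:ℝ) ^ (1/q) = (p:ℝ) := by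
    rw [← Real.rpow_add hp0]
    norm_num
  have hD0 : 0 < (p : ℝ) ^ (1 - 1 / q) * ((p : ℝ) ^ (1 / q) * (1 - ε) + ε) := by
    apply mul_pos (Real.rpow_pos_of_pos hp0 _)
    have : 0 ≤ (p:ℝ) ^ (1/q) * (1 - ε) :=
      mul_nonneg (Real.rpow_pos_of_pos hp0 _).le (by linarith)
    linarith
  rw [div_le_iff₀ hD0]
  have hexp : v * ((p : ℝ) ^ (1 - 1 / q) * ((p : ℝ) ^ (1 / q) * (1 - ε) + ε))
      = (p:ℝ) * ((1 - ε) * v) + (p:ℝ) ^ (1 - 1/q) * (ε * v) := by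
    rw [mul_add, ← mul_assoc ((p:ℝ) ^ (1 - 1/q)), hpq]
    ring
  rw [hexp]
  linarith
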